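/- Let G be a path connected, locally path connected and semilocally simply connected topological group with identity 1. Let H = {a ∈ Π₁(G) : s(a) = 1} ⊆ Π₁(G) denote the subspace of path-homotopy classes of paths starting at 1, with the subspace topology of the CO' topology. Then the map J : H × G → Π₁(G), ([γ], g) ↦ [γ·g] (where γ·g is the translated path t ↦ γ(t)·g), is a homeomorphism, with inverse a ↦ (a·(s(a))⁻¹, s(a)). -/

import Mathlib

open unitInterval

noncomputable section

variable {X : Type*} [TopologicalSpace X]

/-- The path-homotopy (homotopy relative to `{0,1}`) relation on `C(I, X)`. -/
def pRel (f g : C(I, X)) : Prop := f.HomotopicRel g {0, 1}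

/-- The path-homotopy setoid on `C(I, X)`. -/
def pSetoid (X : Type*) [TopologicalSpace X] : Setoid C(I, X) :=
  ⟨pRel, ContinuousMap.HomotopicRel.equivalence⟩

/-- The fundamental groupoid `Π₁(X)` as the quotient of the path space `P(X) = C(I, X)`
(with the compact-open topology) by path homotopy; it carries the quotient (CO') topology. -/
abbrev Pi1 (X : Type*) [TopologicalSpace X] := Quotient (pSetoid X)

/-- The quotient map `q : P(X) → Π₁(X)`. -/
def pq : C(I, X) → Pi1 X := Quotient.mk (pSetoid X)

theorem pRel.endpts {f g : C(I, X)} (h : pRel f g) {t : I} (ht : t ∈ ({0, 1} : Set I)) :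
    f t = g t := h.some.fst_eq_snd ht

/-- The source map `s : Π₁(X) → X`, `[γ] ↦ γ(0)`. -/
def srcMap : Pi1 X → X :=
  Quotient.lift (fun f : C(I, X) => f 0) fun _ _ h =>
    pRel.endpts h (by simp)

/-- The range map `r : Π₁(X) → X`, `[γ] ↦ γ(1)`. -/
def rngMap : Pi1 X → X :=
  Quotient.lift (fun f : C(I, X) => f 1) fun _ _ h =>
    pRel.endpts h (by simp)

/-- A continuous map `I → X` regarded as a `Path` between its endpoints. -/
def toPath (f : C(I, X)) : Path (f 0) (f 1) := ⟨f, rfl, rfl⟩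

/-- Concatenation `α ⧠ β` of paths: traverse `β` first and then `α`
(given `β 1 = α 0`). -/
def concat (α β : C(I, X)) (h : β 1 = α 0) : C(I, X) :=
  ((toPath β).trans ((toPath α).cast h rfl)).toContinuousMap

@[simp] theorem concat_zero (α β : C(I, X)) (h : β 1 = α 0) : concat α β h 0 = β 0 :=
  ((toPath β).trans ((toPath α).cast h rfl)).source

@[simp] theorem concat_one (α β : C(I, X)) (h : β 1 = α 0) : concat α β h 1 = α 1 :=
  ((toPath β).trans ((toPath α).cast h rfl)).target

/-- The set `N([γ], U, V) = {[δ ⧠ γ ⧠ θ] : δ a path in U with δ 0 = γ 1,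
θ a path in V with θ 1 = γ 0}` in `Π₁(X)`. -/
def Nhd (a : Pi1 X) (U V : Set X) : Set (Pi1 X) :=
  { b | ∃ (γ δ θ : C(I, X)) (h₁ : θ 1 = γ 0) (h₂ : γ 1 = δ 0),
      pq γ = a ∧ Set.range δ ⊆ U ∧ Set.range θ ⊆ V ∧
      b = pq (concat δ (concat γ θ h₁) ((concat_one γ θ h₁).trans h₂)) }

/-- A subset `U ⊆ X` is relatively inessential in `X` if every loop in `U` is
null-homotopic (path-homotopic to a constant path) in `X`. -/
def RelInessential (X : Type*) [TopologicalSpace X] (U : Set X) : Prop :=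
  ∀ γ : C(I, X), Set.range γ ⊆ U → γ 1 = γ 0 →
    pRel γ (ContinuousMap.const I (γ 0))

/-- `X` is semilocally simply connected if every point has a relatively inessential
open neighbourhood. -/
def SemilocSimplyConnected (X : Type*) [TopologicalSpace X] : Prop :=
  ∀ x : X, ∃ U : Set X, IsOpen U ∧ x ∈ U ∧ RelInessential X U



section Aux

variable {G : Type*} [TopologicalSpace G] [Group G] [IsTopologicalGroup G]

theorem pRel.refl' (f : C(I, X)) : pRel f f := ⟨ContinuousMap.HomotopyRel.refl f _⟩

/-- Path homotopy respects the pointwise group structure on `C(I, G)`. -/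
theorem pRel.mul {f g f' g' : C(I, G)} (h : pRel f g) (h' : pRel f' g') :
    pRel (f * f') (g * g') := by
  obtain ⟨H⟩ := h
  obtain ⟨H'⟩ := h'
  refine ⟨{ toFun := fun p => H p * H' p
            continuous_toFun := H.continuous.mul H'.continuous
            map_zero_left := ?_
            map_one_left := ?_
            prop' := ?_ }⟩
  · intro x; simp
  · intro x; simp
  · intro t x hx
    simp only [ContinuousMap.coe_mk, ContinuousMap.mul_apply]
    rw [H.eq_fst t hx, H'.eq_fst t hx]

theorem continuous_pq : Continuous (pq : C(I, X) → Pi1 X) := continuous_quotient_mk'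

/-- Right multiplication by a path that is null-homotopic rel endpoints does not change
the path-homotopy class. -/
theorem pq_mul_nullhtpc {δ ν : C(I, G)} (hν : pRel ν 1) : pq (δ * ν) = (pq δ : Pi1 G) := by
  have h : pRel (δ * ν) (δ * 1) := pRel.mul (pRel.refl' δ) hν
  rw [mul_one] at h
  exact Quotient.sound h

/-- Path-homotopic paths differ by right multiplication by a null-homotopic loop. -/
theorem pRel.inv_mul_nullhtpc {γ δ : C(I, G)} (h : pRel γ δ) : pRel (δ⁻¹ * γ) 1 := by
  have h2 := pRel.mul (pRel.refl' δ⁻¹) h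
  rwa [inv_mul_cancel] at h2

/-- The quotient map `pq : C(I, G) → Π₁(G)` is open. -/
theorem isOpenMap_pq : IsOpenMap (pq : C(I, G) → Pi1 G) := by
  intro U hU
  have hpre : (pq : C(I, G) → Pi1 G) ⁻¹' (pq '' U) =
      ⋃ ν : { ν : C(I, G) // pRel ν 1 }, (fun f => f * ν.1) '' U := by
    ext γ
    simp only [Set.mem_preimage, Set.mem_image, Set.mem_iUnion]
    constructor
    · rintro ⟨δ, hδU, hδγ⟩
      have h : pRel γ δ := ((pSetoid G).symm (Quotient.exact hδγ))
      exact ⟨⟨δ⁻¹ * γ, h.inv_mul_nullhtpc⟩, δ, hδU, by simp⟩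
    · rintro ⟨⟨ν, hν⟩, δ, hδU, rfl⟩
      exact ⟨δ, hδU, (pq_mul_nullhtpc hν).symm⟩
  have : IsOpen ((pq : C(I, G) → Pi1 G) ⁻¹' (pq '' U)) := by
    rw [hpre]
    exact isOpen_iUnion fun ν => (isOpenMap_mul_right ν.1) U hU
  exact (isQuotientMap_quotient_mk').isOpen_preimage.mp this

/-- Right translation on `Π₁(G)`. -/
def rmulPi1 (a : Pi1 G) (g : G) : Pi1 G :=
  Quotient.map (fun γ => γ * ContinuousMap.const I g)
    (fun _ _ h => pRel.mul h (pRel.refl' _)) a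

@[simp] theorem rmulPi1_mk (γ : C(I, G)) (g : G) :
    rmulPi1 (pq γ) g = pq (γ * ContinuousMap.const I g) := rfl

@[simp] theorem srcMap_mk (γ : C(I, X)) : srcMap (pq γ) = γ 0 := rfl

theorem srcMap_rmulPi1 (a : Pi1 G) (g : G) : srcMap (rmulPi1 a g) = srcMap a * g := by
  induction a using Quotient.inductionOn with
  | h γ => rfl

theorem continuous_srcMap : Continuous (srcMap : Pi1 X → X) :=
  Continuous.quotient_lift (continuous_eval_const 0) _

theorem continuous_rmulPi1 : Continuous fun p : Pi1 G × G => rmulPi1 p.1 p.2 := by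
  have hq : Topology.IsQuotientMap fun p : C(I, G) × G => ((pq p.1 : Pi1 G), p.2) := by
    refine IsOpenMap.isQuotientMap ?_ ?_ ?_
    · exact isOpenMap_pq.prodMap IsOpenMap.id
    · exact (continuous_pq.comp continuous_fst).prodMk continuous_snd
    · rintro ⟨a, g⟩
      obtain ⟨γ, rfl⟩ := Quotient.exists_rep a
      exact ⟨(γ, g), rfl⟩
  rw [hq.continuous_iff]
  show Continuous fun p : C(I, G) × G => (pq (p.1 * ContinuousMap.const I p.2) : Pi1 G)
  exact continuous_pq.comp
    (continuous_fst.mul (ContinuousMap.continuous_const'.comp continuous_snd))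

theorem continuous_rmul_inv_src :
    Continuous fun a : Pi1 G => rmulPi1 a (srcMap a)⁻¹ := by
  have hfun : (fun a : Pi1 G => rmulPi1 a (srcMap a)⁻¹) =
      Quotient.lift (fun γ : C(I, G) => (pq (γ * ContinuousMap.const I (γ 0)⁻¹) : Pi1 G))
        (fun γ δ h => by
          have h0 : γ 0 = δ 0 := pRel.endpts h (by simp)
          have h2 : pRel (γ * ContinuousMap.const I (γ 0)⁻¹)
              (δ * ContinuousMap.const I (δ 0)⁻¹) := by
            rw [h0]; exact h.mul (pRel.refl' _)
          exact Quotient.sound h2) := by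
    funext a
    induction a using Quotient.inductionOn with
    | h γ => rfl
  rw [hfun]
  refine Continuous.quotient_lift ?_ _
  exact continuous_pq.comp (continuous_id.mul (ContinuousMap.continuous_const'.comp
    ((continuous_eval_const 0).inv)))

end Aux

/-- For a path connected, locally path connected, semilocally simply connected
topological group `G`, with `H = {a ∈ Π₁(G) : s(a) = 1}` (the universal cover, with the
subspace topology), the map `J : H × G → Π₁(G)`, `([γ], g) ↦ [γ·g]`, is a homeomorphism
with inverse `a ↦ (a·(s a)⁻¹, s a)`. -/
theorem stmt13 {G : Type*} [TopologicalSpace G] [Group G] [IsTopologicalGroup G]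
    [PathConnectedSpace G] [LocallyPathConnectedSpace G]
    (hG : SemilocSimplyConnected G) :
    ∃ e : ({ a : Pi1 G // srcMap a = 1 } × G) ≃ₜ Pi1 G,
      (∀ (γ : C(I, G)) (hγ : srcMap (pq γ) = 1) (g : G),
        e (⟨pq γ, hγ⟩, g) = pq (γ * ContinuousMap.const I g)) ∧
      ∀ γ : C(I, G),
        e.symm (pq γ) =
          (⟨pq (γ * ContinuousMap.const I (γ 0)⁻¹),
              show (γ * ContinuousMap.const I (γ 0)⁻¹) 0 = 1 by simp⟩, γ 0) := by
  classical
  refine ⟨Homeomorph.mk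
    { toFun := fun p => rmulPi1 p.1.1 p.2
      invFun := fun a => (⟨rmulPi1 a (srcMap a)⁻¹, by
          rw [srcMap_rmulPi1, mul_inv_cancel]⟩, srcMap a)
      left_inv := ?_
      right_inv := ?_ } ?_ ?_, ?_, ?_⟩
  · rintro ⟨⟨a, ha⟩, g⟩
    induction a using Quotient.inductionOn with
    | h γ =>
      have h0 : γ 0 = 1 := ha
      refine Prod.ext (Subtype.ext ?_) ?_
      · show rmulPi1 (rmulPi1 (pq γ) g) (srcMap (rmulPi1 (pq γ) g))⁻¹ = pq γ
        rw [srcMap_rmulPi1, srcMap_mk, h0, one_mul, rmulPi1_mk, rmulPi1_mk]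
        congr 1
        ext t
        simp
      · show srcMap (rmulPi1 (pq γ) g) = g
        rw [srcMap_rmulPi1, srcMap_mk, h0, one_mul]
  · intro a
    induction a using Quotient.inductionOn with
    | h γ =>
      show rmulPi1 (rmulPi1 (pq γ) (srcMap (pq γ))⁻¹) (srcMap (pq γ)) = pq γ
      rw [srcMap_mk, rmulPi1_mk, rmulPi1_mk]
      congr 1
      ext t
      simp
  · exact continuous_rmulPi1.comp
      ((continuous_subtype_val.comp continuous_fst).prodMk continuous_snd)
  · exact (continuous_rmul_inv_src.subtype_mk _).prodMk continuous_srcMap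
  · intro γ hγ g
    rfl
  · intro γ
    rfl


end
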